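/- Let μ be a Borel probability measure on ℝ supported in [μ̲, μ̄] (μ̲ ≤ μ̄), and suppose there exists y₀ ∈ (μ̲, μ̄) such that for the function φ(x) = exp(−(x−y₀)²/2) one has: p(φ'(x)) = x φ'(x) for μ-almost every x, where p(a) = max(a μ̄, a μ̲). Then μ = δ_{y₀}, the Dirac measure at y₀. -/

import Mathlib

open Set MeasureTheory

theorem stein_characterization_dirac
    (μl μu : ℝ) (hμ : μl ≤ μu)
    (y₀ : ℝ) (hy₀ : y₀ ∈ Ioo μl μu)
    (μ : Measure ℝ) [IsProbabilityMeasure μ]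
    (hsupp : μ (Icc μl μu)ᶜ = 0)
    (φ : ℝ → ℝ) (hφ : ∀ x, φ x = Real.exp (-(x - y₀) ^ 2 / 2))
    (hstein : ∀ᵐ x ∂μ, max (deriv φ x * μu) (deriv φ x * μl) = x * deriv φ x) :
    μ = Measure.dirac y₀ := by
  have hφ' : φ = fun x => Real.exp (-(x - y₀) ^ 2 / 2) := funext hφ
  have hderiv : ∀ x : ℝ, deriv φ x = Real.exp (-(x - y₀) ^ 2 / 2) * (-(x - y₀)) := by
    intro x
    have h1 : HasDerivAt (fun x : ℝ => -(x - y₀) ^ 2 / 2) (-(x - y₀)) x := by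
      have : HasDerivAt (fun x : ℝ => x - y₀) 1 x := (hasDerivAt_id x).sub_const y₀
      have h2 := (this.fun_pow 2).fun_neg.div_const 2
      refine h2.congr_deriv ?_
      ring
    have := h1.exp
    rw [hφ']
    exact this.deriv
  have hae : ∀ᵐ x ∂μ, x ∈ Icc μl μu := by
    rw [ae_iff]
    exact measure_mono_null (fun x hx => hx) hsupp
  have key : ∀ᵐ x ∂μ, x = y₀ := by
    filter_upwards [hstein, hae] with x hx hmem
    by_contra hne
    rw [hderiv] at hx
    have hexp : 0 < Real.exp (-(x - y₀) ^ 2 / 2) := Real.exp_pos _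
    rcases lt_or_gt_of_ne hne with hlt | hgt
    · -- x < y₀ : deriv > 0, max = a * μu, forces μu = x < y₀ < μu
      have ha : 0 < Real.exp (-(x - y₀) ^ 2 / 2) * (-(x - y₀)) := by
        apply mul_pos hexp; linarith
      have hmax : max (Real.exp (-(x - y₀) ^ 2 / 2) * (-(x - y₀)) * μu)
          (Real.exp (-(x - y₀) ^ 2 / 2) * (-(x - y₀)) * μl) =
          Real.exp (-(x - y₀) ^ 2 / 2) * (-(x - y₀)) * μu :=
        max_eq_left (by nlinarith)
      rw [hmax] at hx
      have h2 := mul_pos ha (show (0:ℝ) < μu - x by linarith [hy₀.2])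
      nlinarith [hx]
    · -- x > y₀ : deriv < 0, max = a * μl, forces μl = x > y₀ > μl
      have ha : Real.exp (-(x - y₀) ^ 2 / 2) * (-(x - y₀)) < 0 := by
        apply mul_neg_of_pos_of_neg hexp; linarith
      have hmax : max (Real.exp (-(x - y₀) ^ 2 / 2) * (-(x - y₀)) * μu)
          (Real.exp (-(x - y₀) ^ 2 / 2) * (-(x - y₀)) * μl) =
          Real.exp (-(x - y₀) ^ 2 / 2) * (-(x - y₀)) * μl :=
        max_eq_right (by nlinarith)
      rw [hmax] at hx
      have h2 := mul_pos (neg_pos.mpr ha) (show (0:ℝ) < x - μl by linarith [hy₀.1])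
      nlinarith [hx]
  -- μ is concentrated at y₀
  have hcompl : μ ({y₀} : Set ℝ)ᶜ = 0 := by
    rw [ae_iff] at key
    exact measure_mono_null (fun x hx => hx) key
  have hpoint : μ ({y₀} : Set ℝ) = 1 := by
    have := measure_add_measure_compl (μ := μ) (measurableSet_singleton y₀)
    rw [hcompl, add_zero] at this
    simpa using this
  ext s hs
  rw [Measure.dirac_apply' _ hs]
  by_cases hy : y₀ ∈ s
  · have h1 : μ s = μ (s ∩ {y₀}) + μ (s ∩ {y₀}ᶜ) :=
      (measure_inter_add_diff s (measurableSet_singleton y₀)).symm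
    have h2 : μ (s ∩ {y₀}ᶜ) = 0 := measure_mono_null (inter_subset_right) hcompl
    have h3 : s ∩ {y₀} = {y₀} := by
      apply subset_antisymm inter_subset_right
      intro z hz; exact ⟨by rwa [mem_singleton_iff.mp hz], hz⟩
    rw [h1, h2, h3, hpoint, add_zero]
    simp [indicator, hy]
  · have : μ s ≤ μ ({y₀} : Set ℝ)ᶜ := measure_mono (fun z hz => by
      simp only [mem_compl_iff, mem_singleton_iff]
      rintro rfl; exact hy hz)
    rw [hcompl] at this
    simp [indicator, hy, le_antisymm this zero_le]
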